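/- arXiv:0903.2720 — 5 statements merged into one kernel-verified Lean document; each statement's English description precedes it below -/
import Mathlib

section
/- Let -∞ < ω_* < ω^* < +∞. Say that Z₀ : (ω_*,ω^*) → ℂ is asymptotically zero controllable for the linearized Bloch equation if there exists w ∈ L¹((0,+∞),ℂ) such that the solution Z(t,ω) = (Z₀(ω) - ∫₀^t w(τ) e^{-iωτ} dτ) e^{iωt} satisfies Z(t,ω) → 0 as t → +∞ for every ω ∈ (ω_*,ω^*). Then Z₀ is asymptotically zero controllable if and only if Z₀ is the restriction to (ω_*,ω^*) of F[w] for some w ∈ L¹((0,+∞),ℂ). -/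
open MeasureTheory Complex Set Filter

/-- `Z₀` is asymptotically zero controllable for the linearized Bloch equation
`∂ₜ Z = iωZ - w(t)` on the frequency interval `(ωs, ωe)`: there is an integrable control
`w` on `(0,∞)` such that the explicit solution
`Z(t,ω) = (Z₀(ω) - ∫₀ᵗ w(τ)e^{-iωτ}dτ) e^{iωt}` tends to `0` as `t → ∞`, for every
`ω ∈ (ωs, ωe)`. -/
def AsympZeroControllable (ωs ωe : ℝ) (Z₀ : ℝ → ℂ) : Prop :=
  ∃ w : ℝ → ℂ, IntegrableOn w (Ioi 0) ∧
    ∀ ω ∈ Ioo ωs ωe,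
      Tendsto (fun t : ℝ =>
          (Z₀ ω - ∫ τ in Ioo 0 t, w τ * Complex.exp (-Complex.I * ω * τ)) *
            Complex.exp (Complex.I * ω * t))
        atTop (nhds 0)

lemma norm_exp_I_mul (ω t : ℝ) : ‖Complex.exp (Complex.I * ω * t)‖ = 1 := by
  simp [Complex.norm_exp]

lemma norm_exp_neg_I_mul (ω t : ℝ) : ‖Complex.exp (-Complex.I * ω * t)‖ = 1 := by
  simp [Complex.norm_exp]

lemma integrable_mul_exp {w : ℝ → ℂ} (hw : IntegrableOn w (Ioi 0)) (ω : ℝ) :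
    IntegrableOn (fun τ => w τ * Complex.exp (-Complex.I * ω * τ)) (Ioi 0) := by
  refine hw.norm.mono' ?_ ?_
  · exact hw.aestronglyMeasurable.mul
      ((Complex.continuous_exp.comp (by continuity)).aestronglyMeasurable)
  · filter_upwards with τ
    rw [norm_mul, norm_exp_neg_I_mul, mul_one]

lemma tendsto_partial_integral {w : ℝ → ℂ} (hw : IntegrableOn w (Ioi 0)) (ω : ℝ) :
    Tendsto (fun t : ℝ => ∫ τ in Ioo 0 t, w τ * Complex.exp (-Complex.I * ω * τ))
      atTop (nhds (∫ t in Ioi 0, w t * Complex.exp (-Complex.I * ω * t))) := by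
  have h := intervalIntegral_tendsto_integral_Ioi 0 (integrable_mul_exp hw ω) tendsto_id
  refine h.congr' ?_
  filter_upwards [eventually_ge_atTop (0:ℝ)] with t ht
  simp only [id_eq]
  rw [intervalIntegral.integral_of_le ht, ← integral_Ioc_eq_integral_Ioo]

/-- `Z₀` is asymptotically zero controllable for the linearized Bloch equation
iff it is, on `(ωs, ωe)`, the Fourier transform of an integrable function supported
in `(0, +∞)`. -/
theorem asymp_zero_controllable_iff_fourier
    (ωs ωe : ℝ) (hω : ωs < ωe) (Z₀ : ℝ → ℂ) :
    AsympZeroControllable ωs ωe Z₀ ↔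
      ∃ w : ℝ → ℂ, IntegrableOn w (Ioi 0) ∧
        ∀ ω ∈ Ioo ωs ωe,
          Z₀ ω = ∫ t in Ioi 0, w t * Complex.exp (-Complex.I * ω * t) := by
  constructor
  · rintro ⟨w, hw, hZ⟩
    refine ⟨w, hw, fun ω hωm => ?_⟩
    set L := ∫ t in Ioi 0, w t * Complex.exp (-Complex.I * ω * t) with hL
    have h2 : Tendsto (fun t : ℝ =>
        Z₀ ω - ∫ τ in Ioo 0 t, w τ * Complex.exp (-Complex.I * ω * τ))
        atTop (nhds (Z₀ ω - L)) :=
      tendsto_const_nhds.sub (tendsto_partial_integral hw ω)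
    have h3 : Tendsto (fun t : ℝ =>
        ‖(Z₀ ω - ∫ τ in Ioo 0 t, w τ * Complex.exp (-Complex.I * ω * τ)) *
          Complex.exp (Complex.I * ω * t)‖) atTop (nhds 0) := by
      simpa using (hZ ω hωm).norm
    have h4 : Tendsto (fun t : ℝ =>
        ‖(Z₀ ω - ∫ τ in Ioo 0 t, w τ * Complex.exp (-Complex.I * ω * τ)) *
          Complex.exp (Complex.I * ω * t)‖) atTop (nhds ‖Z₀ ω - L‖) := by
      have := h2.norm
      refine this.congr fun t => ?_
      rw [norm_mul, norm_exp_I_mul, mul_one]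
    have : ‖Z₀ ω - L‖ = 0 := tendsto_nhds_unique h4 h3
    exact sub_eq_zero.mp (norm_eq_zero.mp this)
  · rintro ⟨w, hw, hZ⟩
    refine ⟨w, hw, fun ω hωm => ?_⟩
    have h2 : Tendsto (fun t : ℝ =>
        Z₀ ω - ∫ τ in Ioo 0 t, w τ * Complex.exp (-Complex.I * ω * τ))
        atTop (nhds 0) := by
      have : Tendsto (fun _ : ℝ => Z₀ ω) atTop (nhds (Z₀ ω)) := tendsto_const_nhds
      have h := this.sub (tendsto_partial_integral hw ω)
      rw [hZ ω hωm] at h ⊢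
      simpa only [sub_self] using h
    rw [tendsto_zero_iff_norm_tendsto_zero]
    refine (tendsto_zero_iff_norm_tendsto_zero.mp h2).congr fun t => ?_
    rw [norm_mul, norm_exp_I_mul, mul_one]
end

section
/- Let -∞ < ω_* < ω^* < +∞, b ∈ [0,+∞) and β, γ ∈ ℝ. For ε > 0, consider the bounded linear operator A_ε on H¹((ω_*,ω^*),ℝ³) given by (A_ε M₀)(ω) := exp(ε ω Ω_z + β Ω_x + γ Ω_y) exp(b ω Ω_z) M₀(ω) (the value at time b+ε of the solution of the Bloch equation with controls u = (β/ε)1_{[b,b+ε]}, v = (γ/ε)1_{[b,b+ε]} and initial data M₀), and the operator A₀ given by (A₀ M₀)(ω) := exp(β Ω_x + γ Ω_y) exp(b ω Ω_z) M₀(ω) (the value just after time b of the solution with Dirac controls u = β δ_b, v = γ δ_b). Then ‖A_ε - A₀‖ → 0 as ε → 0 in the operator norm of bounded linear maps from H¹((ω_*,ω^*),ℝ³) to itself. -/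
set_option maxHeartbeats 1000000

open MeasureTheory Complex Set Matrix
open scoped ENNReal NNReal

noncomputable def OmegaX : Matrix (Fin 3) (Fin 3) ℝ := !![0,0,0;0,0,-1;0,1,0]
noncomputable def OmegaY : Matrix (Fin 3) (Fin 3) ℝ := !![0,0,1;0,0,0;-1,0,0]
noncomputable def OmegaZ : Matrix (Fin 3) (Fin 3) ℝ := !![0,-1,0;1,0,0;0,0,0]

/-- `M ∈ H¹((ωs,ωe),ℝ³)` with (weak) derivative `M'`: both are square integrable on the
interval and `M` is the primitive of `M'` there. -/
def H1On (ωs ωe : ℝ) (M M' : ℝ → Fin 3 → ℝ) : Prop :=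
  MemLp M 2 (volume.restrict (Ioo ωs ωe)) ∧
  MemLp M' 2 (volume.restrict (Ioo ωs ωe)) ∧
  ∀ ω₁ ∈ Ioo ωs ωe, ∀ ω₂ ∈ Ioo ωs ωe, M ω₂ - M ω₁ = ∫ s in ω₁..ω₂, M' s

/-- The `H¹((ωs,ωe),ℝ³)` norm of a function `M` with derivative `M'`. -/
noncomputable def H1Norm (ωs ωe : ℝ) (M M' : ℝ → Fin 3 → ℝ) : ℝ :=
  Real.sqrt ((eLpNorm M 2 (volume.restrict (Ioo ωs ωe))).toReal ^ 2 +
    (eLpNorm M' 2 (volume.restrict (Ioo ωs ωe))).toReal ^ 2)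

/-- The matrix `(exp((εω)Ωz + βΩx + γΩy) - exp(βΩx + γΩy)) * exp((bω)Ωz)`. -/
noncomputable def PsiFun (b β γ ε : ℝ) (ω : ℝ) : Matrix (Fin 3) (Fin 3) ℝ :=
  (NormedSpace.exp ((ε * ω) • OmegaZ + β • OmegaX + γ • OmegaY) -
    NormedSpace.exp (β • OmegaX + γ • OmegaY)) * NormedSpace.exp ((b * ω) • OmegaZ)

section Core

open NormedSpace

attribute [local instance] Matrix.linftyOpNormedAddCommGroup Matrix.linftyOpNormedRing
  Matrix.linftyOpNormedAlgebra

noncomputable instance instCENormMat3 : ContinuousENorm (Matrix (Fin 3) (Fin 3) ℝ) :=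
  SeminormedAddGroup.toContinuousENorm
noncomputable instance instENormedMat3 : ENormedAddMonoid (Matrix (Fin 3) (Fin 3) ℝ) :=
  NormedAddGroup.toENormedAddMonoid
noncomputable instance instPMSMat3 : TopologicalSpace.PseudoMetrizableSpace (Matrix (Fin 3) (Fin 3) ℝ) :=
  inferInstanceAs (TopologicalSpace.PseudoMetrizableSpace (Fin 3 → Fin 3 → ℝ))

/-- `A ↦ A *ᵥ v` as a continuous linear map. -/
noncomputable def mvR (v : Fin 3 → ℝ) :
    Matrix (Fin 3) (Fin 3) ℝ →L[ℝ] (Fin 3 → ℝ) :=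
  LinearMap.toContinuousLinearMap
    { toFun := fun A => A *ᵥ v
      map_add' := fun A B => Matrix.add_mulVec A B v
      map_smul' := fun c A => Matrix.smul_mulVec c A v }

@[simp] lemma mvR_apply (v : Fin 3 → ℝ) (A : Matrix (Fin 3) (Fin 3) ℝ) :
    mvR v A = A *ᵥ v := rfl

/-- `v ↦ A *ᵥ v` as a continuous linear map. -/
noncomputable def mvL (A : Matrix (Fin 3) (Fin 3) ℝ) :
    (Fin 3 → ℝ) →L[ℝ] (Fin 3 → ℝ) :=
  LinearMap.toContinuousLinearMap A.mulVecLin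

@[simp] lemma mvL_apply (A : Matrix (Fin 3) (Fin 3) ℝ) (v : Fin 3 → ℝ) :
    mvL A v = A *ᵥ v := rfl

lemma cont_mulVec : Continuous fun p : Matrix (Fin 3) (Fin 3) ℝ × (Fin 3 → ℝ) => p.1 *ᵥ p.2 :=
  continuous_fst.matrix_mulVec continuous_snd

theorem ftc_mulVec_le {ωs ωe : ℝ} (Φ Φ' : ℝ → Matrix (Fin 3) (Fin 3) ℝ)
    (hΦ : ∀ x, HasDerivAt Φ (Φ' x) x) (hΦ'c : Continuous Φ')
    (M M' : ℝ → Fin 3 → ℝ)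
    (hM'i : IntegrableOn M' (Ioo ωs ωe) volume)
    (hftc : ∀ ω₁ ∈ Ioo ωs ωe, ∀ ω₂ ∈ Ioo ωs ωe, M ω₂ - M ω₁ = ∫ s in ω₁..ω₂, M' s)
    {ω₁ ω₂ : ℝ} (h₁ : ω₁ ∈ Ioo ωs ωe) (h₂ : ω₂ ∈ Ioo ωs ωe) (h12 : ω₁ ≤ ω₂) :
    Φ ω₂ *ᵥ M ω₂ - Φ ω₁ *ᵥ M ω₁ = ∫ s in ω₁..ω₂, (Φ' s *ᵥ M s + Φ s *ᵥ M' s) := by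
  have hcΦ : Continuous Φ := by
    rw [continuous_iff_continuousAt]; exact fun x => (hΦ x).continuousAt
  have hIcc : Icc ω₁ ω₂ ⊆ Ioo ωs ωe := fun x hx =>
    ⟨lt_of_lt_of_le h₁.1 hx.1, lt_of_le_of_lt hx.2 h₂.2⟩
  have hIoc : Ioc ω₁ ω₂ ⊆ Ioo ωs ωe := (Ioc_subset_Icc_self).trans hIcc
  have hM'Icc : IntegrableOn M' (Icc ω₁ ω₂) volume := hM'i.mono_set hIcc
  have hM'I : IntegrableOn M' (Ioc ω₁ ω₂) volume := hM'i.mono_set hIoc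
  have hM'int : IntervalIntegrable M' volume ω₁ ω₂ :=
    (intervalIntegrable_iff_integrableOn_Icc_of_le h12).2 hM'Icc
  -- bounds for Φ, Φ' on Icc
  obtain ⟨K, hK⟩ := isCompact_Icc.exists_bound_of_continuousOn (hcΦ.continuousOn (s := Icc ω₁ ω₂))
  obtain ⟨K', hK'⟩ := isCompact_Icc.exists_bound_of_continuousOn (hΦ'c.continuousOn (s := Icc ω₁ ω₂))
  -- G is the continuous version of M
  set G : ℝ → Fin 3 → ℝ := fun t => M ω₁ + ∫ s in ω₁..t, M' s with hG
  have hGc : ContinuousOn G (Icc ω₁ ω₂) := by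
    rw [← uIcc_of_le h12]
    exact continuousOn_const.add (intervalIntegral.continuousOn_primitive_interval
      (by rwa [uIcc_of_le h12]))
  have hMG : ∀ t ∈ Icc ω₁ ω₂, M t = G t := by
    intro t ht
    have := hftc ω₁ h₁ t (hIcc ht)
    simp only [hG]
    rw [← this]; abel
  -- integrability of the two summands
  have i1 : IntervalIntegrable (fun t => Φ' t *ᵥ M t) volume ω₁ ω₂ := by
    rw [intervalIntegrable_iff_integrableOn_Icc_of_le h12]
    have hcont : ContinuousOn (fun t => Φ' t *ᵥ G t) (Icc ω₁ ω₂) :=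
      cont_mulVec.comp_continuousOn ((hΦ'c.continuousOn).prodMk hGc)
    exact (hcont.integrableOn_compact isCompact_Icc).congr_fun
      (fun t ht => (congrArg _ (hMG t ht)).symm) measurableSet_Icc
  have i2 : IntervalIntegrable (fun t => Φ t *ᵥ M' t) volume ω₁ ω₂ := by
    rw [intervalIntegrable_iff_integrableOn_Icc_of_le h12]
    refine Integrable.mono' (hM'Icc.norm.const_mul K)
      (cont_mulVec.comp_aestronglyMeasurable
        (hcΦ.aestronglyMeasurable.prodMk hM'Icc.aestronglyMeasurable)) ?_
    filter_upwards [ae_restrict_mem measurableSet_Icc] with t ht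
    exact (Matrix.linfty_opNorm_mulVec _ _).trans
      (mul_le_mul_of_nonneg_right (hK t ht) (norm_nonneg _))
  -- integrability of pieces of `Φ' • G`
  have iA : IntervalIntegrable (fun t => Φ' t *ᵥ M ω₁) volume ω₁ ω₂ :=
    ((cont_mulVec.comp (hΦ'c.prodMk continuous_const)).continuousOn).intervalIntegrable_of_Icc h12
  have hPrim : ContinuousOn (fun t => ∫ s in ω₁..t, M' s) (Icc ω₁ ω₂) := by
    rw [← uIcc_of_le h12]
    exact intervalIntegral.continuousOn_primitive_interval (by rwa [uIcc_of_le h12])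
  have iB : IntervalIntegrable (fun t => Φ' t *ᵥ (∫ s in ω₁..t, M' s)) volume ω₁ ω₂ := by
    rw [intervalIntegrable_iff_integrableOn_Icc_of_le h12]
    exact (cont_mulVec.comp_continuousOn
      ((hΦ'c.continuousOn).prodMk hPrim)).integrableOn_compact isCompact_Icc
  have hΦ'int : IntervalIntegrable Φ' volume ω₁ ω₂ := hΦ'c.intervalIntegrable _ _
  have hsub : ∀ s t : ℝ, (∫ u in s..t, Φ' u) = Φ t - Φ s := fun s t =>
    intervalIntegral.integral_eq_sub_of_hasDerivAt (fun x _ => hΦ x) (hΦ'c.intervalIntegrable s t)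
  have stepB : ∫ t in ω₁..ω₂, Φ' t *ᵥ M t =
      (Φ ω₂ - Φ ω₁) *ᵥ M ω₁ + ∫ t in ω₁..ω₂, Φ' t *ᵥ (∫ s in ω₁..t, M' s) := by
    have e1 : ∫ t in ω₁..ω₂, Φ' t *ᵥ M t = ∫ t in ω₁..ω₂, Φ' t *ᵥ G t :=
      intervalIntegral.integral_congr (fun t ht => by
        rw [hMG t (by rwa [uIcc_of_le h12] at ht)])
    rw [e1]
    calc ∫ t in ω₁..ω₂, Φ' t *ᵥ G t
        = ∫ t in ω₁..ω₂, (Φ' t *ᵥ M ω₁ + Φ' t *ᵥ (∫ s in ω₁..t, M' s)) := by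
          refine intervalIntegral.integral_congr (fun t _ => ?_)
          simp only [hG, Matrix.mulVec_add]
      _ = (∫ t in ω₁..ω₂, Φ' t *ᵥ M ω₁) + ∫ t in ω₁..ω₂, Φ' t *ᵥ (∫ s in ω₁..t, M' s) :=
          intervalIntegral.integral_add iA iB
      _ = (Φ ω₂ - Φ ω₁) *ᵥ M ω₁ + ∫ t in ω₁..ω₂, Φ' t *ᵥ (∫ s in ω₁..t, M' s) := by
          congr 1
          have h := (mvR (M ω₁)).intervalIntegral_comp_comm hΦ'int
          change ∫ x in ω₁..ω₂, Φ' x *ᵥ M ω₁ = (∫ x in ω₁..ω₂, Φ' x) *ᵥ M ω₁ at h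
          rw [h, hsub ω₁ ω₂]
  -- Fubini part
  have hK'0 : 0 ≤ K' := (norm_nonneg (Φ' ω₁)).trans (hK' ω₁ ⟨le_refl _, h12⟩)
  have hmeasI : MeasurableSet (Ioc ω₁ ω₂) := measurableSet_Ioc
  set I := Ioc ω₁ ω₂ with hIdef
  haveI : IsFiniteMeasure (volume.restrict I) := by
    constructor; rw [Measure.restrict_apply_univ]; exact measure_Ioc_lt_top
  set S : Set (ℝ × ℝ) := {z : ℝ × ℝ | ω₁ < z.2 ∧ z.2 ≤ z.1} with hSdef
  have hSmeas : MeasurableSet S :=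
    (measurableSet_lt measurable_const measurable_snd).inter
      (measurableSet_le measurable_snd measurable_fst)
  have hFpoint : ∀ t s : ℝ, Φ' t *ᵥ ((Ioc ω₁ t).indicator M' s) =
      S.indicator (fun z => Φ' z.1 *ᵥ M' z.2) (t, s) := by
    intro t s
    by_cases h : s ∈ Ioc ω₁ t
    · rw [Set.indicator_of_mem h, Set.indicator_of_mem (show (t, s) ∈ S from ⟨h.1, h.2⟩)]
    · rw [Set.indicator_of_notMem h, Set.indicator_of_notMem, Matrix.mulVec_zero]
      exact fun hc => h ⟨hc.1, hc.2⟩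
  have hFmeas : AEStronglyMeasurable (S.indicator fun z : ℝ × ℝ => Φ' z.1 *ᵥ M' z.2)
      ((volume.restrict I).prod (volume.restrict I)) := by
    refine AEStronglyMeasurable.indicator ?_ hSmeas
    refine cont_mulVec.comp_aestronglyMeasurable (AEStronglyMeasurable.prodMk ?_ ?_)
    · exact (hΦ'c.comp continuous_fst).aestronglyMeasurable
    · exact hM'I.aestronglyMeasurable.comp_quasiMeasurePreserving
        Measure.quasiMeasurePreserving_snd
  have hFint : Integrable (S.indicator fun z : ℝ × ℝ => Φ' z.1 *ᵥ M' z.2)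
      ((volume.restrict I).prod (volume.restrict I)) := by
    refine Integrable.mono' (Integrable.mul_prod (integrable_const K') hM'I.norm) hFmeas ?_
    rw [Measure.prod_restrict]
    refine (ae_restrict_iff' (hmeasI.prod hmeasI)).2 (Filter.Eventually.of_forall ?_)
    rintro ⟨t, s⟩ hz
    by_cases h : (t, s) ∈ S
    · rw [Set.indicator_of_mem h]
      exact (Matrix.linfty_opNorm_mulVec _ _).trans
        (mul_le_mul_of_nonneg_right (hK' t (Ioc_subset_Icc_self hz.1)) (norm_nonneg _))
    · rw [Set.indicator_of_notMem h, norm_zero]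
      positivity
  have stepE : ∫ t in ω₁..ω₂, Φ' t *ᵥ (∫ s in ω₁..t, M' s) =
      ∫ s in ω₁..ω₂, (Φ ω₂ - Φ s) *ᵥ M' s := by
    rw [intervalIntegral.integral_of_le h12, intervalIntegral.integral_of_le h12]
    calc ∫ t in I, Φ' t *ᵥ (∫ s in ω₁..t, M' s)
        = ∫ t in I, ∫ s in I, S.indicator (fun z => Φ' z.1 *ᵥ M' z.2) (t, s) := by
          refine setIntegral_congr_fun hmeasI (fun t ht => ?_)
          have h1 : (∫ s in ω₁..t, M' s) = ∫ s in I, (Ioc ω₁ t).indicator M' s := by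
            rw [intervalIntegral.integral_of_le ht.1.le, setIntegral_indicator measurableSet_Ioc,
              Set.inter_eq_self_of_subset_right (Ioc_subset_Ioc_right ht.2)]
          rw [h1]
          have hind : Integrable ((Ioc ω₁ t).indicator M') (volume.restrict I) :=
            hM'I.indicator measurableSet_Ioc
          have h2 := (mvL (Φ' t)).integral_comp_comm hind
          simp only [mvL_apply] at h2
          rw [← h2]
          exact integral_congr_ae (Filter.Eventually.of_forall fun s => hFpoint t s)
      _ = ∫ s in I, ∫ t in I, S.indicator (fun z => Φ' z.1 *ᵥ M' z.2) (t, s) :=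
          integral_integral_swap hFint
      _ = ∫ s in I, (Φ ω₂ - Φ s) *ᵥ M' s := by
          refine setIntegral_congr_fun hmeasI (fun s hs => ?_)
          have hpt : ∀ t : ℝ, S.indicator (fun z => Φ' z.1 *ᵥ M' z.2) (t, s) =
              (Ici s).indicator (fun t => Φ' t *ᵥ M' s) t := by
            intro t
            by_cases h : s ≤ t
            · rw [Set.indicator_of_mem (show (t, s) ∈ S from ⟨hs.1, h⟩),
                Set.indicator_of_mem (show t ∈ Ici s from h)]
            · have hnS : (t, s) ∉ S := fun hc => h hc.2
              have hnI : t ∉ Ici s := h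
              rw [Set.indicator_of_notMem hnS, Set.indicator_of_notMem hnI]
          have hIS : I ∩ Ici s = Icc s ω₂ := by
            ext t
            constructor
            · rintro ⟨⟨_, h2⟩, h3⟩; exact ⟨h3, h2⟩
            · rintro ⟨h3, h2⟩; exact ⟨⟨lt_of_lt_of_le hs.1 h3, h2⟩, h3⟩
          rw [integral_congr_ae (Filter.Eventually.of_forall hpt),
            setIntegral_indicator measurableSet_Ici, hIS]
          have hintc : IntegrableOn Φ' (Icc s ω₂) volume :=
            (hΦ'c.continuousOn).integrableOn_compact isCompact_Icc
          have h3 := (mvR (M' s)).integral_comp_comm hintc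
          change ∫ x in Icc s ω₂, Φ' x *ᵥ M' s = (∫ x in Icc s ω₂, Φ' x) *ᵥ M' s at h3
          rw [h3, integral_Icc_eq_integral_Ioc, ← intervalIntegral.integral_of_le hs.2,
            hsub s ω₂]
  -- combine everything
  have i3 : IntervalIntegrable (fun s => (Φ ω₂ - Φ s) *ᵥ M' s) volume ω₁ ω₂ := by
    rw [intervalIntegrable_iff_integrableOn_Icc_of_le h12]
    refine Integrable.mono' ((hM'Icc.norm).const_mul (‖Φ ω₂‖ + K))
      (cont_mulVec.comp_aestronglyMeasurable
        (((continuous_const.sub hcΦ).aestronglyMeasurable).prodMk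
          hM'Icc.aestronglyMeasurable)) ?_
    filter_upwards [ae_restrict_mem measurableSet_Icc] with t ht
    refine (Matrix.linfty_opNorm_mulVec _ _).trans
      (mul_le_mul_of_nonneg_right ?_ (norm_nonneg _))
    exact (norm_sub_le _ _).trans (add_le_add le_rfl (hK t ht))
  rw [intervalIntegral.integral_add i1 i2, stepB, stepE]
  have hcomb : (∫ s in ω₁..ω₂, (Φ ω₂ - Φ s) *ᵥ M' s) + ∫ s in ω₁..ω₂, Φ s *ᵥ M' s
      = Φ ω₂ *ᵥ (M ω₂ - M ω₁) := by
    rw [← intervalIntegral.integral_add i3 i2]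
    have hpt : ∀ s : ℝ, (Φ ω₂ - Φ s) *ᵥ M' s + Φ s *ᵥ M' s = Φ ω₂ *ᵥ M' s := by
      intro s; rw [Matrix.sub_mulVec]; abel
    rw [intervalIntegral.integral_congr (fun s _ => hpt s)]
    have h4 := (mvL (Φ ω₂)).intervalIntegral_comp_comm hM'int
    simp only [mvL_apply] at h4
    rw [h4, ← hftc ω₁ h₁ ω₂ h₂]
  rw [add_assoc, hcomb, Matrix.sub_mulVec, Matrix.mulVec_sub]
  abel
theorem ftc_mulVec {ωs ωe : ℝ} (Φ Φ' : ℝ → Matrix (Fin 3) (Fin 3) ℝ)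
    (hΦ : ∀ x, HasDerivAt Φ (Φ' x) x) (hΦ'c : Continuous Φ')
    (M M' : ℝ → Fin 3 → ℝ)
    (hM'i : IntegrableOn M' (Ioo ωs ωe) volume)
    (hftc : ∀ ω₁ ∈ Ioo ωs ωe, ∀ ω₂ ∈ Ioo ωs ωe, M ω₂ - M ω₁ = ∫ s in ω₁..ω₂, M' s) :
    ∀ ω₁ ∈ Ioo ωs ωe, ∀ ω₂ ∈ Ioo ωs ωe,
      Φ ω₂ *ᵥ M ω₂ - Φ ω₁ *ᵥ M ω₁ = ∫ s in ω₁..ω₂, (Φ' s *ᵥ M s + Φ s *ᵥ M' s) := by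
  intro ω₁ h₁ ω₂ h₂
  rcases le_total ω₁ ω₂ with h | h
  · exact ftc_mulVec_le Φ Φ' hΦ hΦ'c M M' hM'i hftc h₁ h₂ h
  · have hrev := ftc_mulVec_le Φ Φ' hΦ hΦ'c M M' hM'i hftc h₂ h₁ h
    rw [intervalIntegral.integral_symm, ← hrev]
    abel

theorem master {ωs ωe : ℝ} (hω : ωs < ωe) (Ψ Ψ' : ℝ → Matrix (Fin 3) (Fin 3) ℝ)
    (hΨd : ∀ x, HasDerivAt Ψ (Ψ' x) x) (hΨ'c : Continuous Ψ')
    (c₁ c₂ : ℝ)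
    (hb1 : ∀ ω ∈ Icc ωs ωe, ‖Ψ ω‖ ≤ c₁) (hb2 : ∀ ω ∈ Icc ωs ωe, ‖Ψ' ω‖ ≤ c₂)
    (M₀ M₀' : ℝ → Fin 3 → ℝ) (hM : H1On ωs ωe M₀ M₀') :
    H1On ωs ωe (fun ω => Ψ ω *ᵥ M₀ ω) (fun ω => Ψ' ω *ᵥ M₀ ω + Ψ ω *ᵥ M₀' ω) ∧
    H1Norm ωs ωe (fun ω => Ψ ω *ᵥ M₀ ω) (fun ω => Ψ' ω *ᵥ M₀ ω + Ψ ω *ᵥ M₀' ω) ≤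
      2 * (c₁ + c₂) * H1Norm ωs ωe M₀ M₀' := by
  obtain ⟨hM1, hM2, hM3⟩ := hM
  set μ := volume.restrict (Ioo ωs ωe) with hμ
  haveI : IsFiniteMeasure μ := by
    constructor; rw [Measure.restrict_apply_univ]; exact measure_Ioo_lt_top
  have hΨc : Continuous Ψ := by
    rw [continuous_iff_continuousAt]; exact fun x => (hΨd x).continuousAt
  have hc₁0 : 0 ≤ c₁ := (norm_nonneg (Ψ ωs)).trans (hb1 ωs ⟨le_refl _, hω.le⟩)
  have hc₂0 : 0 ≤ c₂ := (norm_nonneg (Ψ' ωs)).trans (hb2 ωs ⟨le_refl _, hω.le⟩)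
  -- measurability
  have hNm : AEStronglyMeasurable (fun ω => Ψ ω *ᵥ M₀ ω) μ :=
    cont_mulVec.comp_aestronglyMeasurable (hΨc.aestronglyMeasurable.prodMk hM1.1)
  have hg1m : AEStronglyMeasurable (fun ω => Ψ' ω *ᵥ M₀ ω) μ :=
    cont_mulVec.comp_aestronglyMeasurable (hΨ'c.aestronglyMeasurable.prodMk hM1.1)
  have hg2m : AEStronglyMeasurable (fun ω => Ψ ω *ᵥ M₀' ω) μ :=
    cont_mulVec.comp_aestronglyMeasurable (hΨc.aestronglyMeasurable.prodMk hM2.1)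
  -- pointwise bounds
  have hbN : ∀ᵐ ω ∂μ, ‖Ψ ω *ᵥ M₀ ω‖ ≤ c₁ * ‖M₀ ω‖ := by
    filter_upwards [ae_restrict_mem measurableSet_Ioo] with ω hω'
    exact (Matrix.linfty_opNorm_mulVec _ _).trans
      (mul_le_mul_of_nonneg_right (hb1 ω (Ioo_subset_Icc_self hω')) (norm_nonneg _))
  have hbg1 : ∀ᵐ ω ∂μ, ‖Ψ' ω *ᵥ M₀ ω‖ ≤ c₂ * ‖M₀ ω‖ := by
    filter_upwards [ae_restrict_mem measurableSet_Ioo] with ω hω'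
    exact (Matrix.linfty_opNorm_mulVec _ _).trans
      (mul_le_mul_of_nonneg_right (hb2 ω (Ioo_subset_Icc_self hω')) (norm_nonneg _))
  have hbg2 : ∀ᵐ ω ∂μ, ‖Ψ ω *ᵥ M₀' ω‖ ≤ c₁ * ‖M₀' ω‖ := by
    filter_upwards [ae_restrict_mem measurableSet_Ioo] with ω hω'
    exact (Matrix.linfty_opNorm_mulVec _ _).trans
      (mul_le_mul_of_nonneg_right (hb1 ω (Ioo_subset_Icc_self hω')) (norm_nonneg _))
  -- MemLp
  have hNℒ : MemLp (fun ω => Ψ ω *ᵥ M₀ ω) 2 μ := hM1.of_le_mul hNm hbN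
  have hg1ℒ : MemLp (fun ω => Ψ' ω *ᵥ M₀ ω) 2 μ := hM1.of_le_mul hg1m hbg1
  have hg2ℒ : MemLp (fun ω => Ψ ω *ᵥ M₀' ω) 2 μ := hM2.of_le_mul hg2m hbg2
  have hgℒ : MemLp (fun ω => Ψ' ω *ᵥ M₀ ω + Ψ ω *ᵥ M₀' ω) 2 μ := hg1ℒ.add hg2ℒ
  -- integrability of M₀' on the interval
  have hM'i : IntegrableOn M₀' (Ioo ωs ωe) volume := by
    rw [IntegrableOn, ← memLp_one_iff_integrable]
    exact hM2.mono_exponent (by norm_num)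
  have hH1 : H1On ωs ωe (fun ω => Ψ ω *ᵥ M₀ ω) (fun ω => Ψ' ω *ᵥ M₀ ω + Ψ ω *ᵥ M₀' ω) :=
    ⟨hNℒ, hgℒ, ftc_mulVec Ψ Ψ' hΨd hΨ'c M₀ M₀' hM'i hM3⟩
  refine ⟨hH1, ?_⟩
  -- norm bound
  set x := (eLpNorm M₀ 2 μ).toReal with hx
  set y := (eLpNorm M₀' 2 μ).toReal with hy
  have hx0 : 0 ≤ x := ENNReal.toReal_nonneg
  have hy0 : 0 ≤ y := ENNReal.toReal_nonneg
  have haN : (eLpNorm (fun ω => Ψ ω *ᵥ M₀ ω) 2 μ).toReal ≤ c₁ * x := by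
    have h := eLpNorm_le_mul_eLpNorm_of_ae_le_mul hbN 2
    have h' := ENNReal.toReal_mono
      (ENNReal.mul_ne_top ENNReal.ofReal_ne_top hM1.eLpNorm_ne_top) h
    rwa [ENNReal.toReal_mul, ENNReal.toReal_ofReal hc₁0] at h'
  have hag1 : (eLpNorm (fun ω => Ψ' ω *ᵥ M₀ ω) 2 μ).toReal ≤ c₂ * x := by
    have h := eLpNorm_le_mul_eLpNorm_of_ae_le_mul hbg1 2
    have h' := ENNReal.toReal_mono
      (ENNReal.mul_ne_top ENNReal.ofReal_ne_top hM1.eLpNorm_ne_top) h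
    rwa [ENNReal.toReal_mul, ENNReal.toReal_ofReal hc₂0] at h'
  have hag2 : (eLpNorm (fun ω => Ψ ω *ᵥ M₀' ω) 2 μ).toReal ≤ c₁ * y := by
    have h := eLpNorm_le_mul_eLpNorm_of_ae_le_mul hbg2 2
    have h' := ENNReal.toReal_mono
      (ENNReal.mul_ne_top ENNReal.ofReal_ne_top hM2.eLpNorm_ne_top) h
    rwa [ENNReal.toReal_mul, ENNReal.toReal_ofReal hc₁0] at h'
  have hag : (eLpNorm (fun ω => Ψ' ω *ᵥ M₀ ω + Ψ ω *ᵥ M₀' ω) 2 μ).toReal ≤ c₂ * x + c₁ * y := by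
    have h := eLpNorm_add_le hg1m hg2m (by norm_num : (1:ℝ≥0∞) ≤ 2)
    have h' := ENNReal.toReal_mono
      (ENNReal.add_ne_top.2 ⟨hg1ℒ.eLpNorm_ne_top, hg2ℒ.eLpNorm_ne_top⟩) h
    rw [ENNReal.toReal_add hg1ℒ.eLpNorm_ne_top hg2ℒ.eLpNorm_ne_top] at h'
    exact h'.trans (add_le_add hag1 hag2)
  set a := (eLpNorm (fun ω => Ψ ω *ᵥ M₀ ω) 2 μ).toReal with ha
  set bb := (eLpNorm (fun ω => Ψ' ω *ᵥ M₀ ω + Ψ ω *ᵥ M₀' ω) 2 μ).toReal with hbbd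
  have ha0 : 0 ≤ a := ENNReal.toReal_nonneg
  have hbb0 : 0 ≤ bb := ENNReal.toReal_nonneg
  have hsq : a ^ 2 + bb ^ 2 ≤ (2 * (c₁ + c₂)) ^ 2 * (x ^ 2 + y ^ 2) := by
    have h1 : a ^ 2 ≤ (c₁ * x) ^ 2 := pow_le_pow_left₀ ha0 haN 2
    have h2 : bb ^ 2 ≤ (c₂ * x + c₁ * y) ^ 2 := pow_le_pow_left₀ hbb0 hag 2
    nlinarith [sq_nonneg (c₂ * x - c₁ * y), sq_nonneg (c₁ * x), sq_nonneg (c₂ * y),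
      sq_nonneg (c₁ * y), sq_nonneg (c₂ * x), mul_nonneg hc₁0 hc₂0,
      mul_nonneg hx0 hy0, sq_nonneg (x - y), sq_nonneg (x + y),
      mul_nonneg (mul_nonneg hc₁0 hc₂0) (mul_nonneg hx0 hy0)]
  have : H1Norm ωs ωe (fun ω => Ψ ω *ᵥ M₀ ω) (fun ω => Ψ' ω *ᵥ M₀ ω + Ψ ω *ᵥ M₀' ω) ≤
      Real.sqrt ((2 * (c₁ + c₂)) ^ 2 * (x ^ 2 + y ^ 2)) := Real.sqrt_le_sqrt hsq
  refine this.trans ?_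
  rw [Real.sqrt_mul (sq_nonneg _), Real.sqrt_sq (by positivity)]
  exact le_of_eq rfl

theorem key {ωs ωe : ℝ} (hω : ωs < ωe) (b β γ : ℝ) :
    ∃ C > (0:ℝ), ∀ ε : ℝ, 0 < ε → ε ≤ 1 → ∃ Ψ' : ℝ → Matrix (Fin 3) (Fin 3) ℝ,
      (∀ x, HasDerivAt (PsiFun b β γ ε) (Ψ' x) x) ∧ Continuous Ψ' ∧
      (∀ ω ∈ Icc ωs ωe, ‖PsiFun b β γ ε ω‖ ≤ ε * C) ∧
      (∀ ω ∈ Icc ωs ωe, ‖Ψ' ω‖ ≤ ε * C) := by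
  classical
  set e : ℝ → Matrix (Fin 3) (Fin 3) ℝ :=
    fun t => exp (t • OmegaZ + β • OmegaX + γ • OmegaY) with he
  set B : ℝ → Matrix (Fin 3) (Fin 3) ℝ := fun ω => exp ((b * ω) • OmegaZ) with hB
  have he0 : e 0 = exp (β • OmegaX + γ • OmegaY) := by
    simp only [he, zero_smul, zero_add]
  have hPsi : ∀ ε ω : ℝ, PsiFun b β γ ε ω = (e (ε * ω) - e 0) * B ω := by
    intro ε ω; rw [he0]; rfl
  -- analyticity and differentiability of e
  have hL : AnalyticOnNhd ℝ (fun t : ℝ => t • OmegaZ + β • OmegaX + γ • OmegaY) univ := by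
    intro t _
    exact ((((ContinuousLinearMap.id ℝ ℝ).smulRight OmegaZ).analyticAt t).add
      analyticAt_const).add analyticAt_const
  have hea : AnalyticOnNhd ℝ e univ := fun t ht => (exp_analytic _).comp (hL t ht)
  have hecd : ContDiff ℝ 1 e := hea.contDiff
  have hediff : ∀ t, HasDerivAt e (deriv e t) t := fun t =>
    ((hecd.differentiable one_ne_zero) t).hasDerivAt
  have hedc : Continuous (deriv e) := hecd.continuous_deriv le_rfl
  -- derivative of B
  have hBd : ∀ ω, HasDerivAt B (B ω * (b • OmegaZ)) ω := by
    intro ω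
    have h := hasDerivAt_exp_smul_const (𝕂 := ℝ) (b • OmegaZ) ω
    have e1 : (fun u : ℝ => exp (u • (b • OmegaZ))) = B := by
      funext u
      show exp (u • (b • OmegaZ)) = exp ((b * u) • OmegaZ)
      rw [smul_smul, mul_comm]
    have e2 : exp (ω • (b • OmegaZ)) = B ω := by
      show _ = exp ((b * ω) • OmegaZ); rw [smul_smul, mul_comm]
    have h' : HasDerivAt (fun u : ℝ => exp (u • (b • OmegaZ))) (exp (ω • (b • OmegaZ)) * (b • OmegaZ)) ω := h
    rw [e1, e2] at h'
    exact h'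
  have hBc : Continuous B := by
    rw [continuous_iff_continuousAt]; exact fun x => (hBd x).continuousAt
  -- numerical bounds
  set R : ℝ := |ωs| + |ωe| + 1 with hR
  have hR0 : 0 < R := by positivity
  have hωR : ∀ ω ∈ Icc ωs ωe, |ω| ≤ R := by
    intro ω hω'
    have h1 := neg_abs_le ωs
    have h2 := le_abs_self ωe
    have h3 := hω'.1
    have h4 := hω'.2
    rw [abs_le]
    constructor <;> linarith [abs_nonneg ωs, abs_nonneg ωe]
  obtain ⟨K1, hK1⟩ := isCompact_Icc.exists_bound_of_continuousOn
    (hedc.continuousOn (s := Icc (-R) R))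
  have hK10 : 0 ≤ K1 := (norm_nonneg (deriv e 0)).trans
    (hK1 0 ⟨by linarith, by linarith⟩)
  obtain ⟨K2, hK2⟩ := isCompact_Icc.exists_bound_of_continuousOn
    (hBc.continuousOn (s := Icc ωs ωe))
  have hK20 : 0 ≤ K2 := (norm_nonneg (B ωs)).trans (hK2 ωs ⟨le_refl _, hω.le⟩)
  set nb : ℝ := ‖b • OmegaZ‖ with hnb
  have hnb0 : 0 ≤ nb := norm_nonneg _
  have hMVT : ∀ t ∈ Icc (-R) R, ‖e t - e 0‖ ≤ K1 * |t| := by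
    intro t ht
    have h0mem : (0:ℝ) ∈ Icc (-R) R := ⟨by linarith, by linarith⟩
    have h := (convex_Icc (-R) R).norm_image_sub_le_of_norm_hasDerivWithin_le
      (fun x _ => (hediff x).hasDerivWithinAt) (fun x hx => hK1 x hx) h0mem ht
    simpa [Real.norm_eq_abs] using h
  refine ⟨K1 * R * K2 + K1 * K2 + K1 * R * K2 * nb + 1, by positivity, ?_⟩
  intro ε hε0 hε1
  set C : ℝ := K1 * R * K2 + K1 * K2 + K1 * R * K2 * nb + 1 with hC
  have hεω : ∀ ω ∈ Icc ωs ωe, ε * ω ∈ Icc (-R) R := by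
    intro ω hω'
    have habs : |ε * ω| ≤ R := by
      rw [abs_mul, abs_of_pos hε0]
      calc ε * |ω| ≤ 1 * R :=
            mul_le_mul hε1 (hωR ω hω') (abs_nonneg _) zero_le_one
        _ = R := one_mul R
    exact abs_le.mp habs
  have hbe : ∀ ω ∈ Icc ωs ωe, ‖e (ε * ω) - e 0‖ ≤ ε * (K1 * R) := by
    intro ω hω'
    refine (hMVT _ (hεω ω hω')).trans ?_
    rw [abs_mul, abs_of_pos hε0]
    calc K1 * (ε * |ω|) ≤ K1 * (ε * R) :=
          mul_le_mul_of_nonneg_left (mul_le_mul_of_nonneg_left (hωR ω hω') hε0.le) hK10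
      _ = ε * (K1 * R) := by ring
  refine ⟨fun ω => (ε • deriv e (ε * ω)) * B ω + (e (ε * ω) - e 0) * (B ω * (b • OmegaZ)),
    ?_, ?_, ?_, ?_⟩
  · intro x
    have hlin : HasDerivAt (fun ω : ℝ => ε * ω) ε x := by
      simpa using (hasDerivAt_id x).const_mul ε
    have h1 : HasDerivAt (fun ω => e (ε * ω)) (ε • deriv e (ε * x)) x :=
      (hediff (ε * x)).scomp x hlin
    have h2 := (h1.sub_const (e 0)).mul (hBd x)
    have hfun2 : (fun ω => (e (ε * ω) - e 0) * B ω) = PsiFun b β γ ε := by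
      funext ω; rw [hPsi]
    rw [show ((fun x => e (ε * x) - e 0) * B) = PsiFun b β γ ε from hfun2] at h2
    exact h2
  · have := hecd.continuous
    fun_prop
  · intro ω hω'
    rw [hPsi]
    refine (Matrix.linfty_opNorm_mul _ _).trans ?_
    refine (mul_le_mul (hbe ω hω') (hK2 ω hω') (norm_nonneg _) (by positivity)).trans ?_
    rw [hC]
    nlinarith [mul_nonneg (mul_nonneg hK10 hR0.le) hK20,
      mul_nonneg (mul_nonneg (mul_nonneg hK10 hR0.le) hK20) hnb0,
      mul_nonneg hK10 hK20, hε0.le]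
  · intro ω hω'
    refine (norm_add_le _ _).trans ?_
    have t1 : ‖(ε • deriv e (ε * ω)) * B ω‖ ≤ (ε * K1) * K2 := by
      refine (Matrix.linfty_opNorm_mul _ _).trans ?_
      refine mul_le_mul ?_ (hK2 ω hω') (norm_nonneg _) (by positivity)
      rw [norm_smul, Real.norm_eq_abs, abs_of_pos hε0]
      exact mul_le_mul_of_nonneg_left (hK1 _ (hεω ω hω')) hε0.le
    have t2 : ‖(e (ε * ω) - e 0) * (B ω * (b • OmegaZ))‖ ≤ (ε * (K1 * R)) * (K2 * nb) := by
      refine (Matrix.linfty_opNorm_mul _ _).trans ?_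
      refine mul_le_mul (hbe ω hω') ?_ (norm_nonneg _) (by positivity)
      exact (Matrix.linfty_opNorm_mul _ _).trans
        (mul_le_mul_of_nonneg_right (hK2 ω hω') hnb0)
    rw [hC]
    nlinarith [mul_nonneg (mul_nonneg hK10 hR0.le) hK20,
      mul_nonneg (mul_nonneg (mul_nonneg hK10 hR0.le) hK20) hnb0,
      mul_nonneg hK10 hK20, hε0.le, t1, t2]

end Core

/-- the value at time `b+ε` of the Bloch flow with controls
`u = (β/ε)1_{[b,b+ε]}`, `v = (γ/ε)1_{[b,b+ε]}` converges, as `ε → 0`, to the Dirac-controlled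
flow `exp(βΩ_x+γΩ_y)exp(bωΩ_z)` in the operator norm of bounded operators on
`H¹((ω_*,ω^*),ℝ³)`: for every `η > 0` there is `ε₀ > 0` such that for all `ε ∈ (0,ε₀)` and
all `M₀ ∈ H¹`, the difference `(A_ε - A₀)M₀` lies in `H¹` with
`‖(A_ε - A₀)M₀‖_{H¹} ≤ η ‖M₀‖_{H¹}`. -/
theorem dirac_control_operator_norm_limit
    (ωs ωe : ℝ) (hω : ωs < ωe) (b : ℝ) (hb : 0 ≤ b) (β γ : ℝ) :
    ∀ η > (0:ℝ), ∃ ε₀ > (0:ℝ), ∀ ε : ℝ, 0 < ε → ε < ε₀ →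
      ∀ M₀ M₀' : ℝ → Fin 3 → ℝ, H1On ωs ωe M₀ M₀' →
        ∃ g : ℝ → Fin 3 → ℝ,
          H1On ωs ωe
            (fun ω =>
              NormedSpace.exp ((ε * ω) • OmegaZ + β • OmegaX + γ • OmegaY) *ᵥ
                (NormedSpace.exp ((b * ω) • OmegaZ) *ᵥ M₀ ω) -
              NormedSpace.exp (β • OmegaX + γ • OmegaY) *ᵥ
                (NormedSpace.exp ((b * ω) • OmegaZ) *ᵥ M₀ ω)) g ∧
          H1Norm ωs ωe
            (fun ω =>
              NormedSpace.exp ((ε * ω) • OmegaZ + β • OmegaX + γ • OmegaY) *ᵥ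
                (NormedSpace.exp ((b * ω) • OmegaZ) *ᵥ M₀ ω) -
              NormedSpace.exp (β • OmegaX + γ • OmegaY) *ᵥ
                (NormedSpace.exp ((b * ω) • OmegaZ) *ᵥ M₀ ω)) g ≤
            η * H1Norm ωs ωe M₀ M₀' := by
  intro η hη
  obtain ⟨C, hC, hkey⟩ := key hω b β γ
  refine ⟨min 1 (η / (4 * C + 4)), lt_min one_pos (by positivity), ?_⟩
  intro ε hε0 hεlt M₀ M₀' hM
  have hε1 : ε ≤ 1 := le_of_lt (lt_of_lt_of_le hεlt (min_le_left _ _))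
  obtain ⟨Ψ', hd, hc, hb1, hb2⟩ := hkey ε hε0 hε1
  have hfun : (fun ω =>
      NormedSpace.exp ((ε * ω) • OmegaZ + β • OmegaX + γ • OmegaY) *ᵥ
        (NormedSpace.exp ((b * ω) • OmegaZ) *ᵥ M₀ ω) -
      NormedSpace.exp (β • OmegaX + γ • OmegaY) *ᵥ
        (NormedSpace.exp ((b * ω) • OmegaZ) *ᵥ M₀ ω)) =
      fun ω => PsiFun b β γ ε ω *ᵥ M₀ ω := by
    funext ω
    show _ = ((NormedSpace.exp ((ε * ω) • OmegaZ + β • OmegaX + γ • OmegaY) -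
      NormedSpace.exp (β • OmegaX + γ • OmegaY)) *
        NormedSpace.exp ((b * ω) • OmegaZ)) *ᵥ M₀ ω
    rw [Matrix.sub_mul, Matrix.sub_mulVec, ← Matrix.mulVec_mulVec, ← Matrix.mulVec_mulVec]
  have hmaster := master hω (PsiFun b β γ ε) Ψ' hd hc (ε * C) (ε * C) hb1 hb2 M₀ M₀' hM
  refine ⟨fun ω => Ψ' ω *ᵥ M₀ ω + PsiFun b β γ ε ω *ᵥ M₀' ω, ?_, ?_⟩
  · rw [hfun]; exact hmaster.1
  · rw [hfun]
    refine hmaster.2.trans ?_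
    have hnn : 0 ≤ H1Norm ωs ωe M₀ M₀' := Real.sqrt_nonneg _
    refine mul_le_mul_of_nonneg_right ?_ hnn
    have hε2 : ε ≤ η / (4 * C + 4) := le_of_lt (lt_of_lt_of_le hεlt (min_le_right _ _))
    have hh : ε * (4 * C + 4) ≤ η := by
      rw [← le_div_iff₀ (by positivity)]
      exact hε2
    nlinarith [hε0.le, hC.le]
end

section
/- Let M ∈ S² with M ≠ e₃. Then there exist ξ ∈ {x,y} and θ ∈ [0,2π) such that: (a) for every ω ∈ ℝ, exp((π+θ) Ω_ξ) exp(ω Ω_z) exp(π Ω_ξ) exp(ω Ω_z) = exp(θ Ω_ξ) (so that the corresponding Dirac-controlled evolution of duration 2 sends every point of the ensemble, independently of ω, to exp(θ Ω_ξ) M), and (b) | exp(θ Ω_ξ) M - e₃ | < | M - e₃ | in the Euclidean norm of ℝ³. -/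
open Matrix Real Set

/-- The Euclidean norm of a vector of `ℝ³`. -/
noncomputable def eucNorm (v : Fin 3 → ℝ) : ℝ := Real.sqrt (v ⬝ᵥ v)

section ExpRot

attribute [local instance] Matrix.linftyOpNormedAddCommGroup Matrix.linftyOpNormedRing
  Matrix.linftyOpNormedAlgebra

lemma exp_rot (A : Matrix (Fin 3) (Fin 3) ℝ) (hA : A * A * A = -A) (θ : ℝ) :
    NormedSpace.exp (θ • A) = 1 + Real.sin θ • A + (1 - Real.cos θ) • (A * A) := by
  set R : ℝ → Matrix (Fin 3) (Fin 3) ℝ :=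
    fun t => 1 + Real.sin t • A + (1 - Real.cos t) • (A * A) with hRdef
  have hAR : ∀ t, A * R t = Real.cos t • A + Real.sin t • (A * A) := by
    intro t
    simp only [hRdef, mul_add, mul_one, Matrix.mul_smul, ← Matrix.mul_assoc, hA]
    module
  have hR : ∀ t, HasDerivAt R (Real.cos t • A + Real.sin t • (A * A)) t := by
    intro t
    have h1 : HasDerivAt (fun t : ℝ => Real.sin t • A) (Real.cos t • A) t :=
      (Real.hasDerivAt_sin t).smul_const A
    have h2 : HasDerivAt (fun t : ℝ => (1 - Real.cos t) • (A * A)) (Real.sin t • (A * A)) t := by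
      have := ((Real.hasDerivAt_cos t).const_sub 1).smul_const (A * A)
      simp at this
      exact this
    have h3 := ((hasDerivAt_const t (1 : Matrix (Fin 3) (Fin 3) ℝ)).add h1).add h2
    rw [zero_add] at h3
    exact h3
  have hE : ∀ t : ℝ, HasDerivAt (fun u : ℝ => NormedSpace.exp (u • (-A)))
      (NormedSpace.exp (t • (-A)) * (-A)) t := fun t => hasDerivAt_exp_smul_const (-A) t
  set f : ℝ → Matrix (Fin 3) (Fin 3) ℝ := fun t => NormedSpace.exp (t • (-A)) * R t with hfdef
  have hf : ∀ t, HasDerivAt f 0 t := by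
    intro t
    have := (hE t).mul (hR t)
    have h0 : NormedSpace.exp (t • (-A)) * (-A) * R t +
        NormedSpace.exp (t • (-A)) * (Real.cos t • A + Real.sin t • (A * A)) = 0 := by
      rw [Matrix.mul_assoc, Matrix.neg_mul, Matrix.mul_neg, hAR]
      abel
    rwa [h0] at this
  have hconst : ∀ t : ℝ, f t = f 0 := by
    intro t
    apply is_const_of_deriv_eq_zero (fun u => (hf u).differentiableAt) (fun u => (hf u).deriv)
  have hf0 : f 0 = 1 := by simp [hfdef, hRdef, NormedSpace.exp_zero]
  have hinv : NormedSpace.exp (θ • A) * NormedSpace.exp (θ • (-A)) = 1 := by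
    have h := (NormedSpace.exp_add_of_commute
      (by rw [smul_neg]; exact (Commute.refl _).neg_right : Commute (θ • A) (θ • (-A)))).symm
    rw [← smul_add, add_neg_cancel, smul_zero, NormedSpace.exp_zero] at h
    exact h
  calc NormedSpace.exp (θ • A) = NormedSpace.exp (θ • A) * f θ := by
        rw [hconst θ, hf0, mul_one]
    _ = (NormedSpace.exp (θ • A) * NormedSpace.exp (θ • (-A))) * R θ := by
        rw [hfdef]; rw [Matrix.mul_assoc]
    _ = R θ := by rw [hinv, one_mul]

end ExpRot

lemma cubeX : OmegaX * OmegaX * OmegaX = -OmegaX := by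
  ext i j; fin_cases i <;> fin_cases j <;>
    simp [OmegaX, Matrix.mul_apply, Fin.sum_univ_three, Matrix.vecHead, Matrix.vecTail]

lemma cubeY : OmegaY * OmegaY * OmegaY = -OmegaY := by
  ext i j; fin_cases i <;> fin_cases j <;>
    simp [OmegaY, Matrix.mul_apply, Fin.sum_univ_three, Matrix.vecHead, Matrix.vecTail]

lemma cubeZ : OmegaZ * OmegaZ * OmegaZ = -OmegaZ := by
  ext i j; fin_cases i <;> fin_cases j <;>
    simp [OmegaZ, Matrix.mul_apply, Fin.sum_univ_three, Matrix.vecHead, Matrix.vecTail]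

lemma expX (θ : ℝ) : NormedSpace.exp (θ • OmegaX) =
    !![1,0,0;0,Real.cos θ,-Real.sin θ;0,Real.sin θ,Real.cos θ] := by
  rw [exp_rot _ cubeX]
  ext i j; fin_cases i <;> fin_cases j <;>
    simp [OmegaX, Matrix.mul_apply, Fin.sum_univ_three, Matrix.one_apply,
      Matrix.vecHead, Matrix.vecTail]

lemma expY (θ : ℝ) : NormedSpace.exp (θ • OmegaY) =
    !![Real.cos θ,0,Real.sin θ;0,1,0;-Real.sin θ,0,Real.cos θ] := by
  rw [exp_rot _ cubeY]
  ext i j; fin_cases i <;> fin_cases j <;>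
    simp [OmegaY, Matrix.mul_apply, Fin.sum_univ_three, Matrix.one_apply,
      Matrix.vecHead, Matrix.vecTail]

lemma expZ (θ : ℝ) : NormedSpace.exp (θ • OmegaZ) =
    !![Real.cos θ,-Real.sin θ,0;Real.sin θ,Real.cos θ,0;0,0,1] := by
  rw [exp_rot _ cubeZ]
  ext i j; fin_cases i <;> fin_cases j <;>
    simp [OmegaZ, Matrix.mul_apply, Fin.sum_univ_three, Matrix.one_apply,
      Matrix.vecHead, Matrix.vecTail]

lemma midX (ω : ℝ) : NormedSpace.exp (ω • OmegaZ) * NormedSpace.exp (π • OmegaX) *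
    NormedSpace.exp (ω • OmegaZ) = NormedSpace.exp (π • OmegaX) := by
  rw [expZ, expX]
  have h := Real.sin_sq_add_cos_sq ω
  ext i j; fin_cases i <;> fin_cases j <;>
    simp [Matrix.mul_apply, Fin.sum_univ_three, Real.cos_pi, Real.sin_pi,
      Matrix.vecHead, Matrix.vecTail] <;>
    first
      | ring1
      | linear_combination h
      | linear_combination -h

lemma midY (ω : ℝ) : NormedSpace.exp (ω • OmegaZ) * NormedSpace.exp (π • OmegaY) *
    NormedSpace.exp (ω • OmegaZ) = NormedSpace.exp (π • OmegaY) := by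
  rw [expZ, expY]
  have h := Real.sin_sq_add_cos_sq ω
  ext i j; fin_cases i <;> fin_cases j <;>
    simp [Matrix.mul_apply, Fin.sum_univ_three, Real.cos_pi, Real.sin_pi,
      Matrix.vecHead, Matrix.vecTail] <;>
    first
      | ring1
      | linear_combination h
      | linear_combination -h

lemma dirX (θ ω : ℝ) :
    NormedSpace.exp ((π + θ) • OmegaX) * NormedSpace.exp (ω • OmegaZ) *
      NormedSpace.exp (π • OmegaX) * NormedSpace.exp (ω • OmegaZ) =
    NormedSpace.exp (θ • OmegaX) := by
  rw [show ∀ a b c d : Matrix (Fin 3) (Fin 3) ℝ, a*b*c*d = a*(b*c*d) from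
    fun a b c d => by simp only [Matrix.mul_assoc], midX ω, expX, expX, expX]
  ext i j; fin_cases i <;> fin_cases j <;>
    simp [Matrix.mul_apply, Fin.sum_univ_three, Real.cos_pi, Real.sin_pi,
      Real.cos_add, Real.sin_add, Matrix.vecHead, Matrix.vecTail] <;> ring

lemma dirY (θ ω : ℝ) :
    NormedSpace.exp ((π + θ) • OmegaY) * NormedSpace.exp (ω • OmegaZ) *
      NormedSpace.exp (π • OmegaY) * NormedSpace.exp (ω • OmegaZ) =
    NormedSpace.exp (θ • OmegaY) := by
  rw [show ∀ a b c d : Matrix (Fin 3) (Fin 3) ℝ, a*b*c*d = a*(b*c*d) from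
    fun a b c d => by simp only [Matrix.mul_assoc], midY ω, expY, expY, expY]
  ext i j; fin_cases i <;> fin_cases j <;>
    simp [Matrix.mul_apply, Fin.sum_univ_three, Real.cos_pi, Real.sin_pi,
      Real.cos_add, Real.sin_add, Matrix.vecHead, Matrix.vecTail] <;> ring

lemma exists_theta (a b : ℝ) (h : a ≠ 0 ∨ b < 0) :
    ∃ θ ∈ Ico (0:ℝ) (2 * π),
      Real.cos θ * b + Real.sin θ * a > b := by
  set r : ℝ := Real.sqrt (a ^ 2 + b ^ 2) with hr
  have hpos : 0 < a ^ 2 + b ^ 2 := by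
    rcases h with h | h
    · positivity
    · have : b ≠ 0 := ne_of_lt h
      positivity
  have hrpos : 0 < r := Real.sqrt_pos.mpr hpos
  have hr2 : r ^ 2 = a ^ 2 + b ^ 2 := Real.sq_sqrt hpos.le
  have hbr : b < r := by
    rcases h with h | h
    · nlinarith [sq_nonneg (r - b), sq_abs a, abs_pos.mpr h]
    · linarith
  have hble : -1 ≤ b / r ∧ b / r ≤ 1 := by
    constructor
    · rw [le_div_iff₀ hrpos]; nlinarith [sq_nonneg (r + b)]
    · rw [div_le_one hrpos]; linarith
  have hcos_ar : Real.cos (Real.arccos (b / r)) = b / r := Real.cos_arccos hble.1 hble.2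
  have hsin_ar : Real.sin (Real.arccos (b / r)) = Real.sqrt (1 - (b / r) ^ 2) :=
    Real.sin_arccos ..
  have hsq : 1 - (b / r) ^ 2 = (a / r) ^ 2 := by
    field_simp
    nlinarith [hr2]
  have key : ∀ θ : ℝ, Real.cos θ = b / r → Real.sin θ = a / r →
      Real.cos θ * b + Real.sin θ * a > b := by
    intro θ hc hs
    rw [hc, hs]
    have : b / r * b + a / r * a = r := by
      field_simp
      nlinarith [hr2]
    linarith [this]
  rcases le_or_gt 0 a with ha | ha
  · refine ⟨Real.arccos (b / r), ⟨Real.arccos_nonneg _, ?_⟩, ?_⟩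
    · have := Real.arccos_le_pi (b / r)
      have := Real.pi_pos
      linarith
    · apply key _ hcos_ar
      rw [hsin_ar, hsq, Real.sqrt_sq_eq_abs, abs_div, abs_of_nonneg ha,
        abs_of_pos hrpos]
  · have harpos : 0 < Real.arccos (b / r) := by
      rw [Real.arccos_pos]
      rw [div_lt_one hrpos]
      exact hbr
    refine ⟨2 * π - Real.arccos (b / r), ⟨?_, ?_⟩, ?_⟩
    · have := Real.arccos_le_pi (b / r)
      have := Real.pi_pos
      linarith
    · linarith
    · apply key
      · rw [Real.cos_sub, Real.cos_two_pi, Real.sin_two_pi, hcos_ar]; ring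
      · rw [Real.sin_sub, Real.cos_two_pi, Real.sin_two_pi, hsin_ar, hsq,
          Real.sqrt_sq_eq_abs, abs_div, abs_of_neg ha, abs_of_pos hrpos]
        ring

/-- for every `M ∈ S²` with `M ≠ e₃`, there are `Ω ∈ {Ω_x, Ω_y}` and
`θ ∈ [0,2π)` such that `exp((π+θ)Ω) exp(ωΩ_z) exp(πΩ) exp(ωΩ_z) = exp(θΩ)` for every
`ω ∈ ℝ` (so the corresponding Dirac-controlled evolution of duration 2 sends every member of
the ensemble, independently of `ω`, to `exp(θΩ)M`), and `|exp(θΩ)M - e₃| < |M - e₃|`. -/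
theorem dirac_step_towards_e3
    (M : Fin 3 → ℝ) (hM : M ⬝ᵥ M = 1) (hMe₃ : M ≠ ![0, 0, 1]) :
    ∃ Ω ∈ ({OmegaX, OmegaY} : Set (Matrix (Fin 3) (Fin 3) ℝ)),
      ∃ θ ∈ Ico (0:ℝ) (2 * π),
        (∀ ω : ℝ,
          NormedSpace.exp ((π + θ) • Ω) * NormedSpace.exp (ω • OmegaZ) *
              NormedSpace.exp (π • Ω) * NormedSpace.exp (ω • OmegaZ) =
            NormedSpace.exp (θ • Ω)) ∧
        eucNorm (NormedSpace.exp (θ • Ω) *ᵥ M - ![0, 0, 1]) <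
          eucNorm (M - ![0, 0, 1]) := by
  have hMsum : M 0 ^ 2 + M 1 ^ 2 + M 2 ^ 2 = 1 := by
    simpa [dotProduct, Fin.sum_univ_three, sq] using hM
  have hnorm_goal : ∀ v2 : ℝ, M 2 < v2 → v2 ^ 2 ≤ 1 →
      Real.sqrt (2 - 2 * v2) < Real.sqrt (2 - 2 * M 2) := by
    intro v2 h1 h2
    apply Real.sqrt_lt_sqrt
    · nlinarith
    · linarith
  have hMnorm : eucNorm (M - ![0, 0, 1]) = Real.sqrt (2 - 2 * M 2) := by
    unfold eucNorm
    congr 1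
    simp [dotProduct, Fin.sum_univ_three]
    nlinarith [hMsum]
  by_cases hx : M 1 ≠ 0 ∨ M 2 < 0
  · -- use OmegaX
    obtain ⟨θ, hθmem, hθ⟩ := exists_theta (M 1) (M 2) hx
    refine ⟨OmegaX, by simp, θ, hθmem, fun ω => dirX θ ω, ?_⟩
    have hv : NormedSpace.exp (θ • OmegaX) *ᵥ M =
        ![M 0, Real.cos θ * M 1 - Real.sin θ * M 2,
          Real.sin θ * M 1 + Real.cos θ * M 2] := by
      rw [expX]
      ext i; fin_cases i <;>
        simp [Matrix.mulVec, dotProduct, Fin.sum_univ_three,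
          Matrix.vecHead, Matrix.vecTail] <;> ring
    rw [hv, hMnorm]
    have heq : eucNorm (![M 0, Real.cos θ * M 1 - Real.sin θ * M 2,
        Real.sin θ * M 1 + Real.cos θ * M 2] - ![0, 0, 1]) =
        Real.sqrt (2 - 2 * (Real.sin θ * M 1 + Real.cos θ * M 2)) := by
      unfold eucNorm
      congr 1
      simp [dotProduct, Fin.sum_univ_three]
      nlinarith [hMsum, Real.sin_sq_add_cos_sq θ]
    rw [heq]
    apply hnorm_goal
    · linarith [hθ]
    · nlinarith [hMsum, Real.sin_sq_add_cos_sq θ, sq_nonneg (M 0),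
        sq_nonneg (Real.cos θ * M 1 - Real.sin θ * M 2)]
  · -- M 1 = 0 and M 2 ≥ 0; then M 0 ≠ 0
    push_neg at hx
    obtain ⟨hM1, hM2⟩ := hx
    have hM0 : M 0 ≠ 0 := by
      intro h0
      apply hMe₃
      have : M 2 = 1 := by nlinarith [hMsum]
      funext i; fin_cases i <;> simp [h0, hM1, this]
    obtain ⟨θ, hθmem, hθ⟩ := exists_theta (-(M 0)) (M 2) (Or.inl (by simpa using hM0))
    refine ⟨OmegaY, by simp, θ, hθmem, fun ω => dirY θ ω, ?_⟩
    have hv : NormedSpace.exp (θ • OmegaY) *ᵥ M =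
        ![Real.cos θ * M 0 + Real.sin θ * M 2, M 1,
          -(Real.sin θ) * M 0 + Real.cos θ * M 2] := by
      rw [expY]
      ext i; fin_cases i <;>
        simp [Matrix.mulVec, dotProduct, Fin.sum_univ_three,
          Matrix.vecHead, Matrix.vecTail] <;> ring
    rw [hv, hMnorm]
    have heq : eucNorm (![Real.cos θ * M 0 + Real.sin θ * M 2, M 1,
        -(Real.sin θ) * M 0 + Real.cos θ * M 2] - ![0, 0, 1]) =
        Real.sqrt (2 - 2 * (-(Real.sin θ) * M 0 + Real.cos θ * M 2)) := by
      unfold eucNorm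
      congr 1
      simp [dotProduct, Fin.sum_univ_three]
      nlinarith [hMsum, Real.sin_sq_add_cos_sq θ]
    rw [heq]
    apply hnorm_goal
    · nlinarith [hθ]
    · nlinarith [hMsum, Real.sin_sq_add_cos_sq θ, sq_nonneg (M 1),
        sq_nonneg (Real.cos θ * M 0 + Real.sin θ * M 2)]
end

section
/- Let -∞ < ω_* < ω^* < +∞ and let M = (x,y,z) ∈ H¹((ω_*,ω^*),S²). Assume that z is not identically zero and that z y' - y z' = 0 and z x' - x z' = 0 almost everywhere on (ω_*,ω^*). Then M is constant on (ω_*,ω^*). (Equivalently, if M is non-constant with z not identically zero, the linear form (P,Q) ↦ ∫_{ω_*}^{ω^*} [ P'(ω)(-z y' + y z') + Q'(ω)(z x' - x z') ] dω on pairs of real polynomials is nonzero.) -/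
open MeasureTheory Set Matrix Filter Metric Topology
open scoped Interval

lemma ae_hasDerivAt_intervalIntegral (f : ℝ → ℝ) (hf : Integrable f) (a : ℝ) :
    ∀ᵐ x, HasDerivAt (fun u => ∫ t in a..u, f t) (f x) x := by
  filter_upwards [IsUnifLocDoublingMeasure.ae_tendsto_average_norm_sub volume
    hf.locallyIntegrable 1] with x hx
  have hav : Tendsto (fun r => ⨍ y in closedBall x r, ‖f y - f x‖) (𝓝[>] 0) (𝓝 0) := by
    have h2 : ∀ᶠ r in 𝓝[>] (0:ℝ), x ∈ closedBall x (1 * r) := by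
      filter_upwards [self_mem_nhdsWithin] with r (hr : 0 < r)
      exact mem_closedBall_self (by linarith)
    exact hx (fun _ => x) (fun r => r) tendsto_id h2
  rw [hasDerivAt_iff_tendsto_slope]
  have key : ∀ u : ℝ, u ≠ x →
      dist (slope (fun u => ∫ t in a..u, f t) x u) (f x)
        ≤ 2 * ⨍ y in closedBall x |u - x|, ‖f y - f x‖ := by
    intro u hu
    set r := |u - x| with hr
    have hux : (0:ℝ) < r := abs_pos.2 (sub_ne_zero.2 hu)
    have hFF : (∫ t in a..u, f t) - (∫ t in a..x, f t) = ∫ t in x..u, f t := by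
      rw [← intervalIntegral.integral_add_adjacent_intervals
        (hf.intervalIntegrable) (hf.intervalIntegrable)]
      ring
    have hint : ∫ t in x..u, (f t - f x) = (∫ t in x..u, f t) - (u - x) * f x := by
      rw [intervalIntegral.integral_sub hf.intervalIntegrable intervalIntegrable_const]
      simp [smul_eq_mul]
    have hsl : slope (fun u => ∫ t in a..u, f t) x u - f x
        = (u - x)⁻¹ * ∫ t in x..u, (f t - f x) := by
      have h0 : u - x ≠ 0 := sub_ne_zero.2 hu
      rw [slope_def_field, hint, hFF]
      field_simp
    have hsub : Ι x u ⊆ closedBall x r := by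
      intro t ht
      rw [mem_closedBall, Real.dist_eq, abs_le]
      rw [Set.mem_uIoc] at ht
      have h1 := le_abs_self (u - x)
      have h2 := neg_abs_le (u - x)
      rcases ht with ⟨ha, hb⟩ | ⟨ha, hb⟩ <;> constructor <;> simp only [hr] <;> linarith
    have hInt : IntegrableOn (fun t => ‖f t - f x‖) (closedBall x r) volume := by
      apply Integrable.norm
      exact hf.integrableOn.sub
        (integrableOn_const measure_closedBall_lt_top.ne)
    have b1 : ‖∫ t in x..u, (f t - f x)‖ ≤ ∫ t in Ι x u, ‖f t - f x‖ :=
      intervalIntegral.norm_integral_le_integral_norm_uIoc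
    have b2 : ∫ t in Ι x u, ‖f t - f x‖ ≤ ∫ t in closedBall x r, ‖f t - f x‖ := by
      apply setIntegral_mono_set hInt
      · filter_upwards with t using norm_nonneg _
      · exact HasSubset.Subset.eventuallyLE hsub
    have b3 : ∫ t in closedBall x r, ‖f t - f x‖
        = (2 * r) * ⨍ y in closedBall x r, ‖f y - f x‖ := by
      rw [setAverage_eq, smul_eq_mul, Real.volume_real_closedBall (by positivity)]
      field_simp
    have hdist : dist (slope (fun u => ∫ t in a..u, f t) x u) (f x)
        = r⁻¹ * ‖∫ t in x..u, (f t - f x)‖ := by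
      rw [Real.dist_eq, hsl, abs_mul, abs_inv, Real.norm_eq_abs]
    rw [hdist]
    calc r⁻¹ * ‖∫ t in x..u, (f t - f x)‖
        ≤ r⁻¹ * ((2 * r) * ⨍ y in closedBall x r, ‖f y - f x‖) := by
          rw [← b3]
          exact mul_le_mul_of_nonneg_left (b1.trans b2) (by positivity)
      _ = 2 * ⨍ y in closedBall x r, ‖f y - f x‖ := by field_simp
  have hcomp : Tendsto (fun u => |u - x|) (𝓝[≠] x) (𝓝[>] 0) := by
    apply tendsto_nhdsWithin_of_tendsto_nhds_of_eventually_within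
    · have : Tendsto (fun u : ℝ => |u - x|) (𝓝 x) (𝓝 0) := by
        have h := (Continuous.tendsto (f := fun u : ℝ => |u - x|)
          (by continuity) x)
        simpa using h
      exact this.mono_left nhdsWithin_le_nhds
    · filter_upwards [self_mem_nhdsWithin] with u (hu : u ≠ x)
      exact abs_pos.2 (sub_ne_zero.2 hu)
  have htend : Tendsto
      (fun u => 2 * ⨍ y in closedBall x |u - x|, ‖f y - f x‖) (𝓝[≠] x) (𝓝 0) := by
    have := (hav.comp hcomp).const_mul 2
    simpa using this
  rw [tendsto_iff_dist_tendsto_zero]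
  apply squeeze_zero' (by filter_upwards with u using dist_nonneg) _ htend
  filter_upwards [self_mem_nhdsWithin] with u (hu : u ≠ x) using key u hu


/-- if `M = (x,y,z) ∈ H¹((ω_*,ω^*),S²)` has `z` not identically zero and
satisfies `z y' - y z' = 0` and `z x' - x z' = 0` almost everywhere on `(ω_*,ω^*)`, then `M`
is constant on `(ω_*,ω^*)`. -/
theorem wronskian_vanishing_implies_constant
    (ωs ωe : ℝ) (hω : ωs < ωe) (M M' : ℝ → Fin 3 → ℝ)
    (hH1 : H1On ωs ωe M M')
    (hsphere : ∀ ω ∈ Ioo ωs ωe, M ω ⬝ᵥ M ω = 1)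
    (hz : ¬ ∀ ω ∈ Ioo ωs ωe, M ω 2 = 0)
    (hwronskian : ∀ᵐ ω ∂(volume.restrict (Ioo ωs ωe)),
      M ω 2 * M' ω 1 - M ω 1 * M' ω 2 = 0 ∧
      M ω 2 * M' ω 0 - M ω 0 * M' ω 2 = 0) :
    ∀ ω₁ ∈ Ioo ωs ωe, ∀ ω₂ ∈ Ioo ωs ωe, M ω₁ = M ω₂ := by
  obtain ⟨hM, hM', hFTC⟩ := hH1
  haveI : IsFiniteMeasure (volume.restrict (Ioo ωs ωe)) :=
    ⟨by rw [Measure.restrict_apply_univ, Real.volume_Ioo]; exact ENNReal.ofReal_lt_top⟩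
  have hIntOn : IntegrableOn M' (Ioo ωs ωe) volume := hM'.integrable (by norm_num)
  have hInti : ∀ i, IntegrableOn (fun t => M' t i) (Ioo ωs ωe) volume := by
    intro i
    refine Integrable.mono hIntOn.norm
      ((continuous_apply i).comp_aestronglyMeasurable hM'.aestronglyMeasurable) ?_
    filter_upwards with t
    simpa using norm_le_pi_norm (M' t) i
  have hsub : ∀ ω₁ ∈ Ioo ωs ωe, ∀ ω₂ ∈ Ioo ωs ωe, Ioc ω₁ ω₂ ⊆ Ioo ωs ωe := by
    intro ω₁ h1 ω₂ h2 t ht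
    exact ⟨h1.1.trans ht.1, lt_of_le_of_lt ht.2 h2.2⟩
  -- componentwise FTC
  have happly : ∀ i : Fin 3, ∀ ω₁ ∈ Ioo ωs ωe, ∀ ω₂ ∈ Ioo ωs ωe,
      M ω₂ i - M ω₁ i = ∫ t in ω₁..ω₂, M' t i := by
    intro i ω₁ h1 ω₂ h2
    have h := congrFun (hFTC ω₁ h1 ω₂ h2) i
    simp only [Pi.sub_apply] at h
    have e : ∀ s : Set ℝ, s ⊆ Ioo ωs ωe → (∫ t in s, M' t) i = ∫ t in s, M' t i := by
      intro s hs
      have := (ContinuousLinearMap.proj (R := ℝ) (φ := fun _ : Fin 3 => ℝ)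
        i).integral_comp_comm (hIntOn.mono_set hs)
      simpa using this.symm
    rw [h]
    simp only [intervalIntegral, Pi.sub_apply]
    rw [e _ (hsub ω₁ h1 ω₂ h2), e _ (hsub ω₂ h2 ω₁ h1)]
  -- indicator extensions
  set g : Fin 3 → ℝ → ℝ := fun i => (Ioo ωs ωe).indicator (fun t => M' t i) with hg
  have hgint : ∀ i, Integrable (g i) volume := fun i =>
    (hInti i).integrable_indicator measurableSet_Ioo
  set c : ℝ := (ωs + ωe) / 2 with hc
  have hcmem : c ∈ Ioo ωs ωe := ⟨by simp only [hc]; linarith, by simp only [hc]; linarith⟩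
  -- a.e. differentiability of each component of M on Ioo
  have hderiv : ∀ᵐ ω, ∀ i : Fin 3, ω ∈ Ioo ωs ωe →
      HasDerivAt (fun u => M u i) (M' ω i) ω := by
    rw [ae_all_iff]
    intro i
    filter_upwards [ae_hasDerivAt_intervalIntegral (g i) (hgint i) c] with ω hd hmem
    have heq : (fun u => M c i + ∫ t in c..u, g i t) =ᶠ[𝓝 ω] fun u => M u i := by
      filter_upwards [isOpen_Ioo.eventually_mem hmem] with u hu
      have h1 : ∫ t in c..u, g i t = ∫ t in c..u, M' t i := by
        apply intervalIntegral.integral_congr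
        intro t ht
        have ht' : t ∈ Ioo ωs ωe := Set.ordConnected_Ioo.uIcc_subset hcmem hu ht
        exact indicator_of_mem ht' _
      rw [h1, ← happly i c hcmem u hu]
      ring
    have hgω : g i ω = M' ω i := indicator_of_mem hmem _
    exact hgω ▸ ((hd.const_add (M c i)).congr_of_eventuallyEq heq.symm)
  -- a.e. orthogonality M ⬝ M' = 0
  have hsph' : ∀ ω ∈ Ioo ωs ωe,
      M ω 0 * M ω 0 + M ω 1 * M ω 1 + M ω 2 * M ω 2 = 1 := by
    intro ω hmem
    have := hsphere ω hmem
    simpa [dotProduct, Fin.sum_univ_three] using this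
  have hdot : ∀ᵐ ω ∂(volume.restrict (Ioo ωs ωe)),
      M ω 0 * M' ω 0 + M ω 1 * M' ω 1 + M ω 2 * M' ω 2 = 0 := by
    filter_upwards [ae_restrict_mem measurableSet_Ioo, ae_restrict_of_ae hderiv]
      with ω hmem hd
    have hS : HasDerivAt
        (fun u => M u 0 * M u 0 + M u 1 * M u 1 + M u 2 * M u 2)
        (M' ω 0 * M ω 0 + M ω 0 * M' ω 0 + (M' ω 1 * M ω 1 + M ω 1 * M' ω 1)
          + (M' ω 2 * M ω 2 + M ω 2 * M' ω 2)) ω :=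
      (((hd 0 hmem).mul (hd 0 hmem)).add ((hd 1 hmem).mul (hd 1 hmem))).add
        ((hd 2 hmem).mul (hd 2 hmem))
    have hconst : HasDerivAt
        (fun u => M u 0 * M u 0 + M u 1 * M u 1 + M u 2 * M u 2) 0 ω := by
      apply HasDerivAt.congr_of_eventuallyEq (hasDerivAt_const ω (1:ℝ))
      filter_upwards [isOpen_Ioo.eventually_mem hmem] with u hu
      exact hsph' u hu
    have huniq := hS.unique hconst
    linarith
  -- z' = 0 a.e.
  have hz'0 : ∀ᵐ ω ∂(volume.restrict (Ioo ωs ωe)), M' ω 2 = 0 := by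
    filter_upwards [hwronskian, hdot, ae_restrict_mem measurableSet_Ioo]
      with ω hw e1 hmem
    obtain ⟨w1, w2⟩ := hw
    have sph := hsph' ω hmem
    linear_combination M ω 2 * e1 - M ω 0 * w2 - M ω 1 * w1 - M' ω 2 * sph
  have hz'0' : ∀ᵐ t, t ∈ Ioo ωs ωe → M' t 2 = 0 :=
    (ae_restrict_iff' measurableSet_Ioo).1 hz'0
  -- z is constant
  have hzc : ∀ ω₁ ∈ Ioo ωs ωe, ∀ ω₂ ∈ Ioo ωs ωe, M ω₂ 2 = M ω₁ 2 := by
    intro ω₁ h1 ω₂ h2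
    have h := happly 2 ω₁ h1 ω₂ h2
    have h0 : ∫ t in ω₁..ω₂, M' t 2 = 0 := by
      have hae : ∀ᵐ t, t ∈ Ι ω₁ ω₂ → M' t 2 = 0 := by
        filter_upwards [hz'0'] with t ht hmem
        exact ht (Set.ordConnected_Ioo.uIcc_subset h1 h2 (uIoc_subset_uIcc hmem))
      calc ∫ t in ω₁..ω₂, M' t 2 = ∫ _t in ω₁..ω₂, (0:ℝ) :=
            intervalIntegral.integral_congr_ae hae
        _ = 0 := intervalIntegral.integral_zero
    linarith
  -- z never vanishes
  push_neg at hz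
  obtain ⟨ω₀, hω₀, hzω₀⟩ := hz
  have hznz : ∀ ω ∈ Ioo ωs ωe, M ω 2 ≠ 0 := by
    intro ω hmem
    rw [hzc ω₀ hω₀ ω hmem]
    exact hzω₀
  -- all derivatives vanish a.e.
  have hM'0 : ∀ᵐ t, t ∈ Ioo ωs ωe → ∀ i : Fin 3, M' t i = 0 := by
    rw [← ae_restrict_iff' measurableSet_Ioo]
    filter_upwards [hwronskian, hz'0, ae_restrict_mem measurableSet_Ioo]
      with ω hw hz2 hmem
    obtain ⟨w1, w2⟩ := hw
    have hzn := hznz ω hmem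
    intro i
    fin_cases i
    · have h : M ω 2 * M' ω 0 = 0 := by rw [hz2] at w2; linarith
      exact (mul_eq_zero.1 h).resolve_left hzn
    · have h : M ω 2 * M' ω 1 = 0 := by rw [hz2] at w1; linarith
      exact (mul_eq_zero.1 h).resolve_left hzn
    · exact hz2
  -- conclude
  intro ω₁ h1 ω₂ h2
  funext i
  have h := happly i ω₁ h1 ω₂ h2
  have h0 : ∫ t in ω₁..ω₂, M' t i = 0 := by
    have hae : ∀ᵐ t, t ∈ Ι ω₁ ω₂ → M' t i = 0 := by
      filter_upwards [hM'0] with t ht hmem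
      exact ht (Set.ordConnected_Ioo.uIcc_subset h1 h2 (uIoc_subset_uIcc hmem)) i
    calc ∫ t in ω₁..ω₂, M' t i = ∫ _t in ω₁..ω₂, (0:ℝ) :=
          intervalIntegral.integral_congr_ae hae
      _ = 0 := intervalIntegral.integral_zero
  linarith
end

section
/- Let N ∈ ℕ, N ≥ 1. The N×N real matrix A with entries A_{k,K} := ∫₀^{π/2} (2k-1) sin((2k-1)ω) ω^K dω, for 1 ≤ k ≤ N and 0 ≤ K ≤ N-1, is invertible. -/
open MeasureTheory Set Real


noncomputable def uu (j K : ℕ) : ℝ :=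
  if j % 2 = 1 ∧ j ≤ K then
    (-1)^((j-1)/2) * (K.descFactorial j : ℝ) * (π/2)^(K-j)
  else if j = K ∧ j % 2 = 0 then (-1)^(K/2) * (K.factorial : ℝ)
  else 0

lemma uu_zero {j K : ℕ} (h : K < j) : uu j K = 0 := by
  simp only [uu]
  rw [if_neg, if_neg]
  · rintro ⟨rfl, -⟩; omega
  · rintro ⟨-, hle⟩; omega

lemma uu_step (j m : ℕ) : uu (j+2) (m+2) = -(((m:ℝ)+2)*((m:ℝ)+1)) * uu j m := by
  simp only [uu]
  rcases Nat.even_or_odd j with he | ho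
  · have hj : j % 2 = 0 := Nat.even_iff.mp he
    rcases eq_or_ne j m with rfl | hne
    · rw [if_neg (by omega), if_pos ⟨rfl, by omega⟩, if_neg (by omega), if_pos ⟨rfl, hj⟩]
      have h1 : (j+2)/2 = j/2 + 1 := by omega
      rw [h1]
      push_cast [Nat.factorial_succ, Nat.factorial_succ]
      ring
    · rw [if_neg (by omega), if_neg (by omega), if_neg (by omega), if_neg (by omega), mul_zero]
  · have hj : j % 2 = 1 := Nat.odd_iff.mp ho
    rcases le_or_gt j m with hle | hlt
    · rw [if_pos ⟨by omega, by omega⟩, if_pos ⟨hj, hle⟩]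
      have h1 : (j+2-1)/2 = (j-1)/2 + 1 := by omega
      have h2 : m + 2 - (j+2) = m - j := by omega
      have h3 : (m+2).descFactorial (j+2) = (m+2)*((m+1)*(m.descFactorial j)) := by
        rw [Nat.succ_descFactorial_succ, Nat.succ_descFactorial_succ]
      rw [h1, h2, h3]
      push_cast
      ring
    · rw [if_neg (by omega), if_neg (by omega), if_neg (by omega), if_neg (by omega), mul_zero]

lemma uu_diag_ne (K : ℕ) : uu K K ≠ 0 := by
  simp only [uu]
  rcases Nat.even_or_odd K with he | ho
  · have h : K % 2 = 0 := Nat.even_iff.mp he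
    rw [if_neg (by simp [h]), if_pos ⟨trivial, h⟩]
    have : (K.factorial : ℝ) ≠ 0 := Nat.cast_ne_zero.mpr K.factorial_ne_zero
    positivity
  · have h : K % 2 = 1 := Nat.odd_iff.mp ho
    rw [if_pos ⟨h, le_rfl⟩, Nat.sub_self, Nat.descFactorial_self, pow_zero, mul_one]
    have : (K.factorial : ℝ) ≠ 0 := Nat.cast_ne_zero.mpr K.factorial_ne_zero
    positivity

lemma cos_nat_pi (k : ℕ) : Real.cos (k * π) = (-1)^k := by
  have := Real.cos_nat_mul_pi_sub 0 k
  simpa using this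

lemma sin_odd (k : ℕ) : Real.sin ((2*k+1 : ℝ) * (π/2)) = (-1)^k := by
  have h : (2*(k:ℝ)+1) * (π/2) = k * π + π/2 := by ring
  rw [h, Real.sin_add, Real.sin_nat_mul_pi, Real.cos_pi_div_two, Real.sin_pi_div_two,
    cos_nat_pi]
  ring

lemma cos_odd (k : ℕ) : Real.cos ((2*k+1 : ℝ) * (π/2)) = 0 := by
  have h : (2*(k:ℝ)+1) * (π/2) = k * π + π/2 := by ring
  rw [h, Real.cos_add, Real.sin_nat_mul_pi, Real.cos_pi_div_two, Real.sin_pi_div_two]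
  ring

lemma intble (n : ℝ) (m : ℕ) (a b : ℝ) :
    IntervalIntegrable (fun ω => n * Real.sin (n*ω) * ω^m) volume a b :=
  Continuous.intervalIntegrable (by fun_prop : Continuous fun ω => n * Real.sin (n*ω) * ω^m) a b

lemma hasDerivAt_aux (n : ℝ) (hn : n ≠ 0) (m : ℕ) (ω : ℝ) :
    HasDerivAt (fun ω => -Real.cos (n*ω) * ω^(m+2) + ((m+2)/n) * Real.sin (n*ω) * ω^(m+1))
      (n * Real.sin (n*ω) * ω^(m+2)
        + (((m:ℝ)+2)*((m:ℝ)+1)/n^2) * (n * Real.sin (n*ω) * ω^m)) ω := by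
  have h1 : HasDerivAt (fun ω : ℝ => n*ω) n ω := by
    simpa using (hasDerivAt_id ω).const_mul n
  have hc : HasDerivAt (fun ω => Real.cos (n*ω)) (-Real.sin (n*ω) * n) ω := h1.cos
  have hs : HasDerivAt (fun ω => Real.sin (n*ω)) (Real.cos (n*ω) * n) ω := h1.sin
  have h := (hc.neg.mul (hasDerivAt_pow (m+2) ω)).add
    ((hs.const_mul (((m:ℝ)+2)/n)).mul (hasDerivAt_pow (m+1) ω))
  refine HasDerivAt.congr_deriv (by exact h) ?_
  push_cast [Pi.neg_apply]
  field_simp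
  ring

lemma integral_step (n : ℝ) (hn : n ≠ 0) (hc2 : Real.cos (n*(π/2)) = 0) (m : ℕ) :
    ∫ ω in (0:ℝ)..(π/2), n * Real.sin (n*ω) * ω^(m+2)
      = ((m:ℝ)+2)/n * Real.sin (n*(π/2)) * (π/2)^(m+1)
        - (((m:ℝ)+2)*((m:ℝ)+1)/n^2) * ∫ ω in (0:ℝ)..(π/2), n * Real.sin (n*ω) * ω^m := by
  have key := intervalIntegral.integral_eq_sub_of_hasDerivAt
    (f := fun ω => -Real.cos (n*ω) * ω^(m+2) + ((m+2)/n) * Real.sin (n*ω) * ω^(m+1))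
    (fun ω _ => hasDerivAt_aux n hn m ω)
    ((intble n (m+2) 0 (π/2)).add (((intble n m 0 (π/2)).const_mul _)))
  rw [intervalIntegral.integral_add (intble n (m+2) 0 (π/2)) ((intble n m 0 (π/2)).const_mul _),
    intervalIntegral.integral_const_mul] at key
  rw [eq_sub_iff_add_eq]
  rw [key]
  simp [hc2]
lemma uu_zero_ne {K : ℕ} (h : K ≠ 0) : uu 0 K = 0 := by
  simp only [uu]
  rw [if_neg (by omega), if_neg (by omega)]

lemma uu_one (K : ℕ) (h : 1 ≤ K) : uu 1 K = (K : ℝ) * (π/2)^(K-1) := by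
  simp only [uu]
  rw [if_pos ⟨trivial, h⟩]
  simp [Nat.descFactorial]

lemma sum_shift (f : ℕ → ℝ) (m : ℕ) :
    ∑ j ∈ Finset.range (m+2+1), f j
      = (∑ j ∈ Finset.range (m+1), f (j+2)) + f 1 + f 0 := by
  rw [Finset.sum_range_succ', show m+2 = (m+1)+1 from rfl, Finset.sum_range_succ']

lemma I_closed (K k : ℕ) :
    ∫ ω in (0:ℝ)..(π/2), (2*(k:ℝ)+1) * Real.sin ((2*(k:ℝ)+1)*ω) * ω^K
      = ∑ j ∈ Finset.range (K+1), uu j K * ((-1:ℝ)^k / (2*(k:ℝ)+1))^j := by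
  set n : ℝ := 2*(k:ℝ)+1 with hn_def
  have hn0 : 0 < n := by positivity
  have hn : n ≠ 0 := ne_of_gt hn0
  induction K using Nat.strong_induction_on with
  | _ K ih =>
    obtain _ | _ | m := K
    · -- K = 0
      have key := intervalIntegral.integral_eq_sub_of_hasDerivAt
        (f := fun ω => -Real.cos (n*ω))
        (f' := fun ω => n * Real.sin (n*ω) * ω^0)
        (fun ω _ => by
          have h1 : HasDerivAt (fun ω : ℝ => n*ω) n ω := by
            simpa using (hasDerivAt_id ω).const_mul n
          simpa [mul_comm, Pi.neg_def] using h1.cos.neg)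
        (intble n 0 0 (π/2))
      rw [key]
      rw [(cos_odd k : Real.cos (n*(π/2)) = 0)]
      simp [uu]
    · -- K = 1
      have key := intervalIntegral.integral_eq_sub_of_hasDerivAt
        (f := fun ω => -Real.cos (n*ω) * ω + Real.sin (n*ω) / n)
        (f' := fun ω => n * Real.sin (n*ω) * ω^1)
        (fun ω _ => by
          have h1 : HasDerivAt (fun ω : ℝ => n*ω) n ω := by
            simpa using (hasDerivAt_id ω).const_mul n
          have h := (h1.cos.neg.mul (hasDerivAt_id ω)).add (h1.sin.div_const n)
          have e : n * Real.sin (n*ω) * ω^1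
              = -(-Real.sin (n*ω) * n) * id ω + -Real.cos (n*ω) * 1
                + Real.cos (n*ω) * n / n := by
            simp only [id_eq, pow_one, mul_div_assoc, div_self hn, mul_one]
            ring
          rw [e]; exact h)
        (intble n 1 0 (π/2))
      rw [key]
      rw [Finset.sum_range_succ, Finset.sum_range_one]
      rw [uu_zero_ne (by omega), uu_one 1 le_rfl]
      rw [(cos_odd k : Real.cos (n*(π/2)) = 0), (sin_odd k : Real.sin (n*(π/2)) = (-1)^k)]
      simp
    · -- K = m + 2
      rw [integral_step n hn (cos_odd k) m, ih m (by omega)]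
      set x : ℝ := (-1:ℝ)^k / n with hx_def
      have hx2 : x^2 = 1/n^2 := by
        rw [hx_def, div_pow, ← pow_mul, mul_comm k 2, pow_mul]
        norm_num
      have hsum := sum_shift (fun j => uu j (m+2) * x^j) m
      rw [hsum]
      have h0 : uu 0 (m+2) * x^0 = 0 := by rw [uu_zero_ne (by omega)]; ring
      have h1 : uu 1 (m+2) * x^1 = ((m:ℝ)+2) * (π/2)^(m+1) * x := by
        rw [uu_one (m+2) (by omega)]
        push_cast
        ring_nf
      rw [h0, h1]
      have hstep : ∀ j ∈ Finset.range (m+1),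
          uu (j+2) (m+2) * x^(j+2)
            = -(((m:ℝ)+2)*((m:ℝ)+1)/n^2) * (uu j m * x^j) := by
        intro j _
        rw [uu_step j m, show x^(j+2) = x^j * x^2 by ring, hx2]
        field_simp
      rw [Finset.sum_congr rfl hstep, ← Finset.mul_sum]
      rw [sin_odd k]
      rw [show (-1:ℝ)^k = x * n by rw [hx_def]; field_simp]
      field_simp
      ring

/-- for `N ≥ 1`, the `N×N` matrix with entries
`A_{k,K} = ∫₀^{π/2} (2k-1) sin((2k-1)ω) ω^K dω` (rows `k ∈ {1,…,N}`, columns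
`K ∈ {0,…,N-1}`), is invertible. -/
theorem sin_moment_matrix_invertible (N : ℕ) (hN : 1 ≤ N) :
    IsUnit (Matrix.of fun k K : Fin N =>
      ∫ ω in Ioo 0 (π / 2),
        (2 * (k : ℕ) + 1 : ℝ) * Real.sin ((2 * (k : ℕ) + 1 : ℝ) * ω) * ω ^ (K : ℕ)) := by
  set x : Fin N → ℝ := fun k => (-1:ℝ)^(k:ℕ) / (2*((k:ℕ):ℝ)+1) with hx_def
  have hA : (Matrix.of fun k K : Fin N =>
      ∫ ω in Ioo 0 (π / 2),
        (2 * (k : ℕ) + 1 : ℝ) * Real.sin ((2 * (k : ℕ) + 1 : ℝ) * ω) * ω ^ (K : ℕ))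
      = (Matrix.vandermonde x) * (Matrix.of fun j K : Fin N => uu (j:ℕ) (K:ℕ)) := by
    ext k K
    rw [Matrix.mul_apply]
    simp only [Matrix.of_apply, Matrix.vandermonde_apply]
    rw [show (∫ ω in Ioo (0:ℝ) (π / 2),
        (2 * (k : ℕ) + 1 : ℝ) * Real.sin ((2 * (k : ℕ) + 1 : ℝ) * ω) * ω ^ (K : ℕ))
        = ∫ ω in (0:ℝ)..(π/2),
        (2 * ((k:ℕ):ℝ) + 1) * Real.sin ((2 * ((k:ℕ):ℝ) + 1) * ω) * ω ^ (K : ℕ) by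
      rw [intervalIntegral.integral_of_le (by positivity),
        MeasureTheory.integral_Ioc_eq_integral_Ioo]]
    rw [I_closed (K:ℕ) (k:ℕ)]
    rw [Fin.sum_univ_eq_sum_range (fun j => x k ^ j * uu j (K:ℕ)) N]
    rw [Finset.sum_subset (Finset.range_subset_range.mpr (by omega : (K:ℕ)+1 ≤ N))
      (fun j _ hj => by
        rw [uu_zero (by simpa using hj : (K:ℕ) < j), zero_mul])]
    exact Finset.sum_congr rfl fun j _ => by rw [hx_def, mul_comm]
  rw [hA, Matrix.isUnit_iff_isUnit_det, Matrix.det_mul, isUnit_iff_ne_zero]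
  apply mul_ne_zero
  · apply Matrix.det_vandermonde_ne_zero_iff.mpr
    intro i j hij
    have habs : ∀ k : Fin N, |x k| = 1/(2*((k:ℕ):ℝ)+1) := by
      intro k
      rw [hx_def]
      rw [abs_div, abs_pow, abs_neg, abs_one, one_pow, abs_of_pos (by positivity)]
    have h2 : (1:ℝ)/(2*((i:ℕ):ℝ)+1) = 1/(2*((j:ℕ):ℝ)+1) := by
      rw [← habs i, ← habs j, hij]
    field_simp at h2
    exact Fin.ext (by exact_mod_cast (by linarith : ((i:ℕ):ℝ) = (j:ℕ)))
  · rw [Matrix.det_of_upperTriangular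
      (by intro i j hij; exact uu_zero (by simpa using hij))]
    exact Finset.prod_ne_zero_iff.mpr fun i _ => by simpa using uu_diag_ne (i:ℕ)
end
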